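/- Let P be the canonical probability measure on the Cantor set. The distortion error of the two-point set β = {(1/6, 1/2), (5/6, 1/2)} ⊂ ℝ², namely ∫ min_{a∈β} ρ(x,a) dP(x) with ρ(x,(a,b)) = (x-a)² + b², equals 19/72, and β minimizes this distortion error over all two-point subsets of the segment S₂ = {(x, 1/2) : 0 ≤ x ≤ 1}. -/

import Mathlib

open MeasureTheory Real Set Filter
open scoped ENNReal Topology

noncomputable section

/-- First generating map of the Cantor set. -/
def T1 (x : ℝ) : ℝ := x / 3

/-- Second generating map of the Cantor set. -/
def T2 (x : ℝ) : ℝ := x / 3 + 2 / 3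

/-- Map indexed by `Fin 2`. -/
def Tm : Fin 2 → ℝ → ℝ := ![T1, T2]

/-- Composition `T_σ = T_{σ₁} ∘ ⋯ ∘ T_{σ_k}` for a word over `{1,2}` (as a list over `Fin 2`). -/
def Tw (l : List (Fin 2)) : ℝ → ℝ := l.foldr (fun i g => Tm i ∘ g) id

/-- Squared Euclidean distance between `x ∈ ℝ` (identified with `(x,0)`) and `(a,b) ∈ ℝ²`. -/
def rho (x : ℝ) (p : ℝ × ℝ) : ℝ := (x - p.1) ^ 2 + p.2 ^ 2

/-- Distortion error of a set `α ⊆ ℝ²` for `P`. -/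
def distortion (P : Measure ℝ) (α : Set (ℝ × ℝ)) : ℝ := ∫ x, ⨅ a : α, rho x (a : ℝ × ℝ) ∂P

/-- The constraint `S_j = {(x, 1/j) : 0 ≤ x ≤ 1}`. -/
def Sj (j : ℕ) : Set (ℝ × ℝ) := {p | p.1 ∈ Icc (0 : ℝ) 1 ∧ p.2 = 1 / (j : ℝ)}

/-- The `n`th constrained quantization error for `P` with respect to the family `Sj`. -/
def Vc (P : Measure ℝ) (n : ℕ) : ℝ :=
  sInf {e : ℝ | ∃ α : Finset (ℝ × ℝ), α.Nonempty ∧ α.card ≤ n ∧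
    (↑α : Set (ℝ × ℝ)) ⊆ ⋃ j ∈ Finset.Icc 1 n, Sj j ∧ e = distortion P (↑α : Set (ℝ × ℝ))}

lemma hT1m : Measurable T1 := by unfold T1; fun_prop
lemma hT2m : Measurable T2 := by unfold T2; fun_prop

lemma measure_eq (P : Measure ℝ) (hP : P = (1 / 2 : ℝ≥0∞) • P.map T1 + (1 / 2 : ℝ≥0∞) • P.map T2)
    {s : Set ℝ} (hs : MeasurableSet s) :
    P s = 1/2 * P (T1 ⁻¹' s) + 1/2 * P (T2 ⁻¹' s) := by
  conv_lhs => rw [hP]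
  simp [Measure.map_apply hT1m hs, Measure.map_apply hT2m hs]

lemma pre1_Ioi (t : ℝ) : T1 ⁻¹' (Ioi t) = Ioi (3*t) := by
  ext x; simp only [mem_preimage, mem_Ioi, T1]
  constructor <;> intro <;> linarith

lemma pre2_Ioi (t : ℝ) : T2 ⁻¹' (Ioi t) = Ioi (3*t - 2) := by
  ext x; simp only [mem_preimage, mem_Ioi, T2]
  constructor <;> intro <;> linarith

lemma pre1_Iio (t : ℝ) : T1 ⁻¹' (Iio t) = Iio (3*t) := by
  ext x; simp only [mem_preimage, mem_Iio, T1]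
  constructor <;> intro <;> linarith

lemma pre2_Iio (t : ℝ) : T2 ⁻¹' (Iio t) = Iio (3*t - 2) := by
  ext x; simp only [mem_preimage, mem_Iio, T2]
  constructor <;> intro <;> linarith

lemma ennreal_cancel {X B : ℝ≥0∞} (hX : X ≠ ⊤) (h : X ≤ 2⁻¹ * B + 2⁻¹ * X) : X ≤ B := by
  have h2 : 2 * X ≤ 2 * (2⁻¹ * B + 2⁻¹ * X) := mul_le_mul_right h 2
  rw [mul_add, ← mul_assoc, ← mul_assoc, show (2:ℝ≥0∞) * 2⁻¹ = 1 by rw [ENNReal.mul_inv_cancel] <;> norm_num, one_mul, one_mul,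
    two_mul] at h2
  exact (ENNReal.add_le_add_iff_right hX).mp h2

variable (P : Measure ℝ) [IsProbabilityMeasure P]

lemma right_step (hP : P = (1 / 2 : ℝ≥0∞) • P.map T1 + (1 / 2 : ℝ≥0∞) • P.map T2)
    {t : ℝ} (ht : 1 ≤ t) : P (Ioi t) = P (Ioi (3*t)) := by
  have h := measure_eq P hP (measurableSet_Ioi (a := t))
  rw [pre1_Ioi, pre2_Ioi] at h
  have hBle : P (Ioi (3*t)) ≤ P (Ioi t) := measure_mono (Ioi_subset_Ioi (by linarith))
  have hCle : P (Ioi (3*t-2)) ≤ P (Ioi t) := measure_mono (Ioi_subset_Ioi (by linarith))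
  refine le_antisymm (ennreal_cancel (measure_ne_top _ _) ?_) hBle
  rw [show (2:ℝ≥0∞)⁻¹ = 1/2 by norm_num]
  calc P (Ioi t) = 1/2 * P (Ioi (3*t)) + 1/2 * P (Ioi (3*t-2)) := h
    _ ≤ 1/2 * P (Ioi (3*t)) + 1/2 * P (Ioi t) := add_le_add_right (mul_le_mul_right hCle _) _

lemma left_step (hP : P = (1 / 2 : ℝ≥0∞) • P.map T1 + (1 / 2 : ℝ≥0∞) • P.map T2)
    {t : ℝ} (ht : t ≤ 0) : P (Iio t) = P (Iio (3*t)) := by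
  have h := measure_eq P hP (measurableSet_Iio (a := t))
  rw [pre1_Iio, pre2_Iio] at h
  have hBle : P (Iio (3*t)) ≤ P (Iio t) := measure_mono (Iio_subset_Iio (by linarith))
  have hCle : P (Iio (3*t-2)) ≤ P (Iio (3*t)) := measure_mono (Iio_subset_Iio (by linarith))
  refine le_antisymm ?_ hBle
  calc P (Iio t) = 1/2 * P (Iio (3*t)) + 1/2 * P (Iio (3*t-2)) := h
    _ ≤ 1/2 * P (Iio (3*t)) + 1/2 * P (Iio (3*t)) := add_le_add_right (mul_le_mul_right hCle _) _
    _ = P (Iio (3*t)) := by rw [← add_mul, ENNReal.add_halves, one_mul]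

lemma right_null (hP : P = (1 / 2 : ℝ≥0∞) • P.map T1 + (1 / 2 : ℝ≥0∞) • P.map T2) :
    P (Ioi (1:ℝ)) = 0 := by
  have ind : ∀ n : ℕ, P (Ioi (1:ℝ)) = P (Ioi ((3:ℝ)^n)) := by
    intro n
    induction n with
    | zero => norm_num
    | succ n ih =>
      rw [ih, right_step P hP (one_le_pow₀ (by norm_num)), pow_succ]
      ring_nf
  have hmono : Antitone (fun n : ℕ => Ioi ((3:ℝ)^n)) := fun m n h =>
    Ioi_subset_Ioi (pow_le_pow_right₀ (by norm_num) h)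
  have hint : ⋂ n : ℕ, Ioi ((3:ℝ)^n) = ∅ := by
    ext x
    simp only [mem_iInter, mem_Ioi, mem_empty_iff_false, iff_false, not_forall, not_lt]
    obtain ⟨n, hn⟩ := pow_unbounded_of_one_lt x (by norm_num : (1:ℝ) < 3)
    exact ⟨n, hn.le⟩
  have hten := MeasureTheory.tendsto_measure_iInter_atTop (μ := P)
    (fun n => measurableSet_Ioi.nullMeasurableSet) hmono ⟨0, measure_ne_top _ _⟩
  rw [hint, measure_empty] at hten
  have : (⇑P ∘ fun n : ℕ => Ioi ((3:ℝ)^n)) = fun _ : ℕ => P (Ioi (1:ℝ)) :=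
    funext fun n => (ind n).symm
  rw [this] at hten
  exact tendsto_nhds_unique tendsto_const_nhds hten

lemma left_null (hP : P = (1 / 2 : ℝ≥0∞) • P.map T1 + (1 / 2 : ℝ≥0∞) • P.map T2) :
    P (Iio (0:ℝ)) = 0 := by
  have h0 : P (Iio (0:ℝ)) ≤ P (Iio (-2:ℝ)) := by
    have h := measure_eq P hP (measurableSet_Iio (a := (0:ℝ)))
    rw [pre1_Iio, pre2_Iio] at h
    norm_num at h
    exact ennreal_cancel (measure_ne_top _ _) (h.trans (add_comm _ _)).le
  have ind : ∀ n : ℕ, P (Iio (-2:ℝ)) = P (Iio ((-2:ℝ) * 3^n)) := by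
    intro n
    induction n with
    | zero => norm_num
    | succ n ih =>
      rw [ih, left_step P hP (t := (-2:ℝ) * 3^n) (by nlinarith [pow_nonneg (by norm_num : (0:ℝ) ≤ 3) n])]
      congr 1
      congr 1
      ring
  have hmono : Antitone (fun n : ℕ => Iio ((-2:ℝ) * 3^n)) := by
    intro m n h
    refine Iio_subset_Iio ?_
    have := pow_le_pow_right₀ (by norm_num : (1:ℝ) ≤ 3) h
    nlinarith
  have hint : ⋂ n : ℕ, Iio ((-2:ℝ) * 3^n) = ∅ := by
    ext x
    simp only [mem_iInter, mem_Iio, mem_empty_iff_false, iff_false, not_forall, not_lt]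
    obtain ⟨n, hn⟩ := pow_unbounded_of_one_lt (-x/2) (by norm_num : (1:ℝ) < 3)
    exact ⟨n, by nlinarith⟩
  have hten := MeasureTheory.tendsto_measure_iInter_atTop (μ := P)
    (fun n => measurableSet_Iio.nullMeasurableSet) hmono ⟨0, measure_ne_top _ _⟩
  rw [hint, measure_empty] at hten
  have heq : (⇑P ∘ fun n : ℕ => Iio ((-2:ℝ) * 3^n)) = fun _ : ℕ => P (Iio (-2:ℝ)) :=
    funext fun n => (ind n).symm
  rw [heq] at hten
  have h2 : P (Iio (-2:ℝ)) = 0 := tendsto_nhds_unique tendsto_const_nhds hten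
  exact le_antisymm (h2 ▸ h0) (zero_le')

lemma supp (hP : P = (1 / 2 : ℝ≥0∞) • P.map T1 + (1 / 2 : ℝ≥0∞) • P.map T2) :
    ∀ᵐ x ∂P, x ∈ Icc (0:ℝ) 1 := by
  rw [ae_iff]
  have : {x : ℝ | ¬ x ∈ Icc (0:ℝ) 1} = Iio 0 ∪ Ioi 1 := by
    ext x
    simp only [mem_setOf_eq, mem_Icc, not_and_or, not_le, mem_union, mem_Iio, mem_Ioi]
  rw [this]
  exact measure_union_null (left_null P hP) (right_null P hP)

lemma integ (hsupp : ∀ᵐ x ∂P, x ∈ Icc (0:ℝ) 1) {f : ℝ → ℝ} (hf : Continuous f) :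
    Integrable f P := by
  obtain ⟨C, hC⟩ := (isCompact_Icc (a := (0:ℝ)) (b := 1)).exists_bound_of_continuousOn
    hf.continuousOn
  refine (integrable_const C).mono' hf.aestronglyMeasurable ?_
  filter_upwards [hsupp] with x hx
  exact hC x hx

lemma int_eq (hP : P = (1 / 2 : ℝ≥0∞) • P.map T1 + (1 / 2 : ℝ≥0∞) • P.map T2)
    (hsupp : ∀ᵐ x ∂P, x ∈ Icc (0:ℝ) 1) {f : ℝ → ℝ} (hf : Continuous f) :
    ∫ x, f x ∂P = (1/2) * ∫ x, f (x/3) ∂P + (1/2) * ∫ x, f (x/3 + 2/3) ∂P := by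
  have h1 : Integrable f (P.map T1) := by
    rw [integrable_map_measure hf.aestronglyMeasurable hT1m.aemeasurable]
    exact integ P hsupp (hf.comp (by unfold T1; fun_prop))
  have h2 : Integrable f (P.map T2) := by
    rw [integrable_map_measure hf.aestronglyMeasurable hT2m.aemeasurable]
    exact integ P hsupp (hf.comp (by unfold T2; fun_prop))
  conv_lhs => rw [hP]
  rw [integral_add_measure (h1.smul_measure (by norm_num)) (h2.smul_measure (by norm_num)),
    integral_smul_measure, integral_smul_measure,
    integral_map hT1m.aemeasurable hf.aestronglyMeasurable,
    integral_map hT2m.aemeasurable hf.aestronglyMeasurable]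
  simp only [T1, T2, smul_eq_mul]
  norm_num

lemma M1 (hP : P = (1 / 2 : ℝ≥0∞) • P.map T1 + (1 / 2 : ℝ≥0∞) • P.map T2)
    (hsupp : ∀ᵐ x ∂P, x ∈ Icc (0:ℝ) 1) : ∫ x, x ∂P = 1/2 := by
  have Ix : Integrable (fun x : ℝ => x) P := integ P hsupp continuous_id
  have h := int_eq P hP hsupp (f := fun x => x) continuous_id
  have e1 : ∫ x, x/3 ∂P = (∫ x, x ∂P) / 3 := integral_div 3 _
  have e2 : ∫ x, (x/3 + 2/3) ∂P = (∫ x, x ∂P) / 3 + 2/3 := by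
    rw [integral_add (Ix.div_const 3) (integrable_const _), integral_div, integral_const]
    simp
  rw [e1, e2] at h
  linarith

lemma M2 (hP : P = (1 / 2 : ℝ≥0∞) • P.map T1 + (1 / 2 : ℝ≥0∞) • P.map T2)
    (hsupp : ∀ᵐ x ∂P, x ∈ Icc (0:ℝ) 1) : ∫ x, x^2 ∂P = 3/8 := by
  have Ix : Integrable (fun x : ℝ => x) P := integ P hsupp continuous_id
  have Ix2 : Integrable (fun x : ℝ => x^2) P := integ P hsupp (by fun_prop)
  have h := int_eq P hP hsupp (f := fun x => x^2) (by fun_prop)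
  have e1 : ∫ x, (x/3)^2 ∂P = (∫ x, x^2 ∂P) / 9 := by
    rw [show (fun x : ℝ => (x/3)^2) = fun x : ℝ => (x^2)/9 by funext x; ring, integral_div]
  have e2 : ∫ x, (x/3 + 2/3)^2 ∂P = (∫ x, x^2 ∂P) / 9 + (4/9) * ∫ x, x ∂P + 4/9 := by
    rw [show (fun x : ℝ => (x/3 + 2/3)^2) = fun x : ℝ => (x^2)/9 + ((4/9) * x + 4/9) by
      funext x; ring]
    rw [integral_add (Ix2.div_const 9) (by exact (Ix.const_mul _).add (integrable_const _)),
      integral_add (Ix.const_mul _) (integrable_const _), integral_div,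
      MeasureTheory.integral_const_mul, integral_const]
    simp [add_assoc]
  rw [e1, e2, M1 P hP hsupp] at h
  linarith

lemma Habs (hP : P = (1 / 2 : ℝ≥0∞) • P.map T1 + (1 / 2 : ℝ≥0∞) • P.map T2)
    (hsupp : ∀ᵐ x ∂P, x ∈ Icc (0:ℝ) 1) {m : ℝ} (h13 : 1/3 ≤ m) (h23 : m ≤ 2/3) :
    ∫ x, |x - m| ∂P = 1/3 := by
  have Ix : Integrable (fun x : ℝ => x) P := integ P hsupp continuous_id
  have h := int_eq P hP hsupp (f := fun x => |x - m|) (by fun_prop)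
  have e1 : ∫ x, |x/3 - m| ∂P = m - 1/6 := by
    have : ∫ x, |x/3 - m| ∂P = ∫ x, (m - x/3) ∂P := by
      refine integral_congr_ae ?_
      filter_upwards [hsupp] with x hx
      rw [abs_of_nonpos (by rcases hx with ⟨h0, h1⟩; linarith)]
      ring
    rw [this, integral_sub (integrable_const _) (Ix.div_const 3), integral_div,
      integral_const, M1 P hP hsupp]
    simp; ring
  have e2 : ∫ x, |x/3 + 2/3 - m| ∂P = 5/6 - m := by
    have : ∫ x, |x/3 + 2/3 - m| ∂P = ∫ x, (x/3 + (2/3 - m)) ∂P := by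
      refine integral_congr_ae ?_
      filter_upwards [hsupp] with x hx
      rw [abs_of_nonneg (by rcases hx with ⟨h0, h1⟩; linarith)]
      ring
    rw [this, integral_add (Ix.div_const 3) (integrable_const _), integral_div,
      integral_const, M1 P hP hsupp]
    simp; ring
  rw [e1, e2] at h
  linarith

lemma Hlip (hsupp : ∀ᵐ x ∂P, x ∈ Icc (0:ℝ) 1) (m m' : ℝ) :
    ∫ x, |x - m| ∂P ≤ (∫ x, |x - m'| ∂P) + |m - m'| := by
  have h1 : Integrable (fun x : ℝ => |x - m'| + |m - m'|) P := by
    exact (integ P hsupp (by fun_prop)).add (integrable_const _)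
  have := integral_mono (integ P hsupp (f := fun x => |x - m|) (by fun_prop)) h1
    (fun x => by
      have h0 := abs_sub_abs_le_abs_sub (x - m) (x - m')
      have h2 : |x - m - (x - m')| = |m' - m| := by congr 1; ring
      have h3 : |m' - m| = |m - m'| := abs_sub_comm _ _
      simp only
      linarith)
  rwa [integral_add (integ P hsupp (by fun_prop)) (integrable_const _), integral_const,
    probReal_univ, smul_eq_mul, one_mul] at this

lemma Dval (hP : P = (1 / 2 : ℝ≥0∞) • P.map T1 + (1 / 2 : ℝ≥0∞) • P.map T2)
    (hsupp : ∀ᵐ x ∂P, x ∈ Icc (0:ℝ) 1) (a b : ℝ) :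
    ∫ x, min ((x - a)^2 + (1/2:ℝ)^2) ((x - b)^2 + (1/2:ℝ)^2) ∂P
      = 3/8 - (a+b)/2 + (a^2+b^2)/2 + 1/4 - |b - a| * ∫ x, |x - (a+b)/2| ∂P := by
  have key : ∀ x : ℝ, min ((x - a)^2 + (1/2:ℝ)^2) ((x - b)^2 + (1/2:ℝ)^2)
      = (x^2 - (a+b)*x + ((a^2+b^2)/2 + 1/4)) - |b - a| * |x - (a+b)/2| := by
    intro x
    rw [← abs_mul]
    rcases le_total ((x - a)^2) ((x - b)^2) with h | h
    · rw [min_eq_left (by linarith), abs_of_nonpos (by nlinarith)]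
      ring
    · rw [min_eq_right (by linarith), abs_of_nonneg (by nlinarith)]
      ring
  have i2 : Integrable (fun x : ℝ => x^2) P := integ P hsupp (by fun_prop)
  have i1 : Integrable (fun x : ℝ => (a+b)*x) P := (integ P hsupp continuous_id).const_mul _
  have iabs : Integrable (fun x : ℝ => |x - (a+b)/2|) P := integ P hsupp (by fun_prop)
  have isub : Integrable (fun x : ℝ => x^2 - (a+b)*x) P := i2.sub i1
  have isum : Integrable (fun x : ℝ => x^2 - (a+b)*x + ((a^2+b^2)/2 + 1/4)) P :=
    isub.add (integrable_const _)
  have Ipoly : ∫ x, (x^2 - (a+b)*x + ((a^2+b^2)/2 + 1/4)) ∂P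
      = 3/8 - (a+b)/2 + ((a^2+b^2)/2 + 1/4) := by
    rw [integral_add isub (integrable_const _), integral_sub i2 i1,
      MeasureTheory.integral_const_mul, integral_const, M1 P hP hsupp, M2 P hP hsupp]
    simp only [measure_univ, ENNReal.toReal_one, probReal_univ, smul_eq_mul, one_mul]
    ring
  rw [integral_congr_ae (Eventually.of_forall key),
    integral_sub isum (iabs.const_mul _),
    MeasureTheory.integral_const_mul, Ipoly]
  ring

theorem optimal_two_points (P : Measure ℝ) [IsProbabilityMeasure P]
    (hP : P = (1 / 2 : ℝ≥0∞) • P.map T1 + (1 / 2 : ℝ≥0∞) • P.map T2) :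
    (∫ x, min (rho x (1 / 6, 1 / 2)) (rho x (5 / 6, 1 / 2)) ∂P) = 19 / 72 ∧
      ∀ a₁ ∈ Icc (0 : ℝ) 1, ∀ a₂ ∈ Icc (0 : ℝ) 1,
        19 / 72 ≤ ∫ x, min (rho x (a₁, 1 / 2)) (rho x (a₂, 1 / 2)) ∂P := by
  have hsupp := supp P hP
  constructor
  · have h := Dval P hP hsupp (1/6) (5/6)
    have habs := Habs P hP hsupp (m := (1/6 + 5/6)/2) (by norm_num) (by norm_num)
    simp only [rho]
    rw [h, habs, show |5/6 - 1/6| = (2/3:ℝ) by rw [abs_of_nonneg] <;> norm_num]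
    norm_num
  · intro a₁ ha a₂ hb
    obtain ⟨ha0, ha1⟩ := ha
    obtain ⟨hb0, hb1⟩ := hb
    have h := Dval P hP hsupp a₁ a₂
    simp only [rho]
    rw [h]
    have he : |a₂ - a₁| ≤ a₁ + a₂ := abs_le.2 ⟨by linarith, by linarith⟩
    have he' : |a₂ - a₁| ≤ 2 - a₁ - a₂ := abs_le.2 ⟨by linarith, by linarith⟩
    have he0 : 0 ≤ |a₂ - a₁| := abs_nonneg _
    have hsq : |a₂ - a₁|^2 = (a₂ - a₁)^2 := sq_abs _
    set m := (a₁ + a₂)/2 with hm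
    set e := |a₂ - a₁| with hee
    set H := ∫ x, |x - m| ∂P with hH
    rcases le_or_gt (1/3) m with h13 | h13
    · rcases le_or_gt m (2/3) with h23 | h23
      · -- middle case
        have : H = 1/3 := Habs P hP hsupp h13 h23
        rw [this]
        nlinarith [sq_nonneg (m - 1/2), sq_nonneg (e - 2/3)]
      · -- right case
        have hHle : H ≤ m - 1/3 := by
          have := Hlip P hsupp m (2/3)
          rw [Habs P hP hsupp (m := 2/3) (by norm_num) (by norm_num),
            abs_of_nonneg (by linarith : (0:ℝ) ≤ m - 2/3)] at this
          linarith
        have hterm : e * H ≤ e * (m - 1/3) := mul_le_mul_of_nonneg_left hHle he0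
        nlinarith [sq_nonneg (m - 1/2 - e/2)]
    · -- left case
      have hHle : H ≤ 2/3 - m := by
        have := Hlip P hsupp m (1/3)
        rw [Habs P hP hsupp (m := 1/3) (by norm_num) (by norm_num),
          abs_of_nonpos (by linarith : m - 1/3 ≤ 0)] at this
        linarith
      have hterm : e * H ≤ e * (2/3 - m) := mul_le_mul_of_nonneg_left hHle he0
      nlinarith [sq_nonneg (1/2 - m - e/2)]
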